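/- (Lemma 2, cyclic rule: sufficient descent over one cycle.) Let X_i ⊆ ℝ^{m_i} be nonempty closed convex, X = ∏_{j=1}^n X_j, f : ℝ^N → ℝ continuously differentiable with ∇f Lipschitz with constant L_{∇f}, g_i convex, h = f + Σ_i g_i, and let f̃_i satisfy τ-strong convexity in the first argument and gradient consistency. Run the PSCA algorithm with constant step-size γ ∈ (0,1] with γ < τ/L_{∇f} and cyclic block selection over a partition {T_0,…,T_{m−1}} of {1,…,n}: at iteration t, with S^t = T_{t mod m}, set x̂_i^t = argmin_{u∈X_i} f̃_i(u,x^t)+g_i(u) and x_i^{t+1} = x_i^t + γ(x̂_i^t − x_i^t) for i ∈ S^t, x_i^{t+1} = x_i^t otherwise. Then for every r ≥ 0, h(x^{m(r+1)}) ≤ h(x^{mr}) − β̃ ‖x^{m(r+1)} − x^{mr}‖², where β̃ = (τ − γ L_{∇f})/(2γ) > 0. -/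

import Mathlib

open scoped RealInnerProductSpace
open Filter Topology Finset

noncomputable section

/-- The product space `ℝ^N = ℝ^{m_1} × … × ℝ^{m_n}` with the Euclidean norm. -/
abbrev TS (n : ℕ) (m : Fin n → ℕ) := PiLp 2 fun j => EuclideanSpace ℝ (Fin (m j))

lemma descent_lemma {E : Type*} [NormedAddCommGroup E] [InnerProductSpace ℝ E] [CompleteSpace E]
    (f : E → ℝ) (hf : ContDiff ℝ 1 f) (L : ℝ)
    (hL : ∀ a b : E, ‖gradient f a - gradient f b‖ ≤ L * ‖a - b‖) (x y : E) :
    f y ≤ f x + ⟪gradient f x, y - x⟫ + L / 2 * ‖y - x‖ ^ 2 := by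
  set v := y - x with hv
  have hgrad : ∀ z : E, HasGradientAt f (gradient f z) z := fun z =>
    (hf.differentiable one_ne_zero z).hasGradientAt
  have hline : ∀ t : ℝ, HasDerivAt (fun s : ℝ => f (x + s • v)) ⟪gradient f (x + t • v), v⟫ t := by
    intro t
    have h1 : HasDerivAt (fun s : ℝ => x + s • v) v t := by
      simpa using ((hasDerivAt_id t).smul_const v).const_add x
    have h2 := (hgrad (x + t • v)).hasFDerivAt
    have h3 := h2.comp_hasDerivAt t h1
    have h4 : HasDerivAt (fun s : ℝ => f (x + s • v)) (((InnerProductSpace.toDual ℝ E) (gradient f (x + t • v))) v) t := h3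
    convert h4 using 1
    rw [InnerProductSpace.toDual_apply_apply]
  have hcontg : Continuous fun z : E => gradient f z := by
    have : Continuous fun z : E => fderiv ℝ f z := hf.continuous_fderiv one_ne_zero
    exact (InnerProductSpace.toDual ℝ E).symm.continuous.comp this
  have hcont : Continuous fun t : ℝ => ⟪gradient f (x + t • v), v⟫ := by
    apply Continuous.inner
    · exact hcontg.comp (by continuity)
    · exact continuous_const
  have hftc : f y - f x = ∫ t in (0:ℝ)..1, ⟪gradient f (x + t • v), v⟫ := by
    have := intervalIntegral.integral_eq_sub_of_hasDerivAt (f := fun s : ℝ => f (x + s • v))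
      (fun t _ => hline t) (hcont.intervalIntegrable 0 1)
    have e1 : x + (1:ℝ) • v = y := by rw [hv]; rw [one_smul]; abel
    have e0 : x + (0:ℝ) • v = x := by rw [zero_smul, add_zero]
    rw [e1, e0] at this
    exact this.symm
  have hintle : ∫ t in (0:ℝ)..1, ⟪gradient f (x + t • v), v⟫ ≤
      ∫ t in (0:ℝ)..1, (⟪gradient f x, v⟫ + L * t * ‖v‖ ^ 2) := by
    apply intervalIntegral.integral_mono_on (by norm_num) (hcont.intervalIntegrable 0 1)
      ((by continuity : Continuous fun t : ℝ => ⟪gradient f x, v⟫ + L * t * ‖v‖ ^ 2).intervalIntegrable 0 1)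
    intro t ht
    have h1 : ⟪gradient f (x + t • v) - gradient f x, v⟫ ≤
        ‖gradient f (x + t • v) - gradient f x‖ * ‖v‖ := real_inner_le_norm _ _
    have h2 : ‖gradient f (x + t • v) - gradient f x‖ ≤ L * (t * ‖v‖) := by
      have := hL (x + t • v) x
      simpa [norm_smul, abs_of_nonneg ht.1, mul_assoc] using this
    have h3 : ‖gradient f (x + t • v) - gradient f x‖ * ‖v‖ ≤ L * (t * ‖v‖) * ‖v‖ :=
      mul_le_mul_of_nonneg_right h2 (norm_nonneg _)
    rw [inner_sub_left] at h1
    nlinarith [sq_nonneg ‖v‖]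
  have hrint : ∫ t in (0:ℝ)..1, (⟪gradient f x, v⟫ + L * t * ‖v‖ ^ 2) =
      ⟪gradient f x, v⟫ + L / 2 * ‖v‖ ^ 2 := by
    have hint2 : IntervalIntegrable (fun t : ℝ => L * t * ‖v‖ ^ 2) MeasureTheory.volume 0 1 :=
      ((by continuity : Continuous fun t : ℝ => L * t * ‖v‖ ^ 2)).intervalIntegrable 0 1
    rw [intervalIntegral.integral_add intervalIntegrable_const hint2,
      intervalIntegral.integral_const]
    have : ∫ t in (0:ℝ)..1, L * t * ‖v‖ ^ 2 = L / 2 * ‖v‖ ^ 2 := by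
      simp only [show ∀ t : ℝ, L * t * ‖v‖ ^ 2 = (L * ‖v‖ ^ 2) * t from fun t => by ring]
      rw [intervalIntegral.integral_const_mul, integral_id]
      ring
    rw [this]
    simp
  linarith [hftc, hintle, hrint.le, hrint.ge]

lemma key_opt {F : Type*} [NormedAddCommGroup F] [InnerProductSpace ℝ F]
    {X : Set F} (hXcv : Convex ℝ X)
    {φ g : F → ℝ} (hg : ConvexOn ℝ Set.univ g)
    {p : F → F} {τ : ℝ} (hτ : 0 < τ)
    (hsc : ∀ u ∈ X, ∀ u' ∈ X, φ u' + ⟪p u', u - u'⟫ + τ / 2 * ‖u - u'‖ ^ 2 ≤ φ u)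
    {x xh : F} (hx : x ∈ X) (hxh : xh ∈ X)
    (hmin : IsMinOn (fun u => φ u + g u) X xh) :
    ⟪p x, xh - x⟫ ≤ g x - g xh - τ * ‖xh - x‖ ^ 2 := by
  set c := τ / 2 * ‖xh - x‖ ^ 2 with hc
  have hc0 : 0 ≤ c := by positivity
  have main2 : φ xh + g xh ≤ φ x + g x - c := by
    have hstep : ∀ l : ℝ, 0 < l → l < 1 → φ xh + g xh ≤ φ x + g x - c + c * l := by
      intro l hl0 hl1
      set u : F := (1 - l) • xh + l • x with hu
      have huX : u ∈ X := hXcv hxh hx (by linarith) hl0.le (by ring)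
      have e1 : xh - u = l • (xh - x) := by rw [hu]; module
      have e2 : x - u = (1 - l) • (x - xh) := by rw [hu]; module
      have h1 := hsc xh hxh u huX
      have h2 := hsc x hx u huX
      rw [e1] at h1
      rw [e2] at h2
      rw [real_inner_smul_right] at h1 h2
      rw [norm_smul, mul_pow] at h1 h2
      have hip : ⟪p u, x - xh⟫ = -⟪p u, xh - x⟫ := by
        rw [← inner_neg_right]; congr 1; abel
      rw [hip] at h2
      have hnn : ‖x - xh‖ = ‖xh - x‖ := norm_sub_rev _ _
      rw [hnn] at h2
      have habs : |l| = l := abs_of_pos hl0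
      have habs2 : |1 - l| = 1 - l := abs_of_pos (by linarith)
      rw [Real.norm_eq_abs, habs] at h1; rw [Real.norm_eq_abs, habs2] at h2
      -- combine: (1-l) * h1 + l * h2
      have hcomb : φ u + τ / 2 * (l * (1 - l)) * ‖xh - x‖ ^ 2 ≤ (1 - l) * φ xh + l * φ x := by
        nlinarith [h1, h2]
      have hgu : g u ≤ (1 - l) * g xh + l * g x :=
        hg.2 (Set.mem_univ xh) (Set.mem_univ x) (by linarith) hl0.le (by ring)
      have hminu : φ xh + g xh ≤ φ u + g u := hmin huX
      have : l * (φ xh + g xh) ≤ l * (φ x + g x) - l * (1 - l) * (2 * c) / 2 := by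
        nlinarith [hcomb, hgu, hminu]
      have := le_of_mul_le_mul_left (by nlinarith [this]) hl0
      nlinarith [this]
    apply le_of_forall_pos_le_add
    intro ε hε
    have hl0 : 0 < min (1/2 : ℝ) (ε / (c + 1)) := lt_min (by norm_num) (by positivity)
    have hl1 : min (1/2 : ℝ) (ε / (c + 1)) < 1 := lt_of_le_of_lt (min_le_left _ _) (by norm_num)
    have h := hstep _ hl0 hl1
    have hcl : c * min (1/2 : ℝ) (ε / (c + 1)) ≤ ε := by
      have h1 : min (1/2 : ℝ) (ε / (c + 1)) ≤ ε / (c + 1) := min_le_right _ _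
      have h2 : c * min (1/2 : ℝ) (ε / (c + 1)) ≤ c * (ε / (c + 1)) :=
        mul_le_mul_of_nonneg_left h1 hc0
      have h3 : c * (ε / (c + 1)) ≤ ε := by
        rw [mul_div_assoc']
        rw [div_le_iff₀ (by linarith)]
        nlinarith
      linarith
    linarith
  have h1 := hsc xh hxh x hx
  have : ⟪p x, xh - x⟫ ≤ φ xh - φ x - c := by linarith
  have h2 : φ xh - φ x ≤ g x - g xh - c := by linarith
  rw [hc] at *
  linarith

/-- **Lemma 2, cyclic rule: sufficient descent over one cycle.** Running
PSCA with constant step-size `γ ∈ (0,1]`, `γ L_{∇f} < τ`, and cyclic block selection over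
a partition `{T_0, …, T_{M−1}}`, for every `r ≥ 0`,
`h(x^{M(r+1)}) ≤ h(x^{Mr}) − β̃ ‖x^{M(r+1)} − x^{Mr}‖²` with
`β̃ = (τ − γ L_{∇f})/(2γ) > 0`, where `h = f + Σ_i g_i`. -/
theorem stmt9
    {n : ℕ} {mblk : Fin n → ℕ}
    (X : ∀ j, Set (EuclideanSpace ℝ (Fin (mblk j))))
    (hXne : ∀ j, (X j).Nonempty) (hXcl : ∀ j, IsClosed (X j)) (hXcv : ∀ j, Convex ℝ (X j))
    (f : TS n mblk → ℝ) (hf : ContDiff ℝ 1 f)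
    (Lf : ℝ)
    -- `∇f` is Lipschitz continuous with constant `L_{∇f}`
    (hfL : ∀ a b : TS n mblk, ‖gradient f a - gradient f b‖ ≤ Lf * ‖a - b‖)
    (g : ∀ j, EuclideanSpace ℝ (Fin (mblk j)) → ℝ) (hg : ∀ j, ConvexOn ℝ Set.univ (g j))
    (ft : ∀ j, EuclideanSpace ℝ (Fin (mblk j)) → TS n mblk → ℝ)
    (τ : ℝ) (hτ : 0 < τ)
    -- `f̃_i(·, y)` is continuously differentiable and `τ`-strongly convex on `X_i`
    (hC1 : ∀ i, ∀ y : TS n mblk, (∀ j, y j ∈ X j) → ContDiff ℝ 1 fun u => ft i u y)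
    (hsc : ∀ i, ∀ y : TS n mblk, (∀ j, y j ∈ X j) → ∀ u ∈ X i, ∀ u' ∈ X i,
      ft i u y ≥ ft i u' y + ⟪gradient (fun v => ft i v y) u', u - u'⟫ + τ / 2 * ‖u - u'‖ ^ 2)
    -- gradient consistency: `∇_{x_i} f̃_i(x_i, x) = ∇_{x_i} f(x)` for all `x ∈ X`
    (hgc : ∀ i, ∀ x : TS n mblk, (∀ j, x j ∈ X j) →
      gradient (fun u => ft i u x) (x i) = gradient f x i)
    -- the partition `{T_0, …, T_{M−1}}` of `{1, …, n}`
    (M : ℕ) (hM : 0 < M) (T : Fin M → Finset (Fin n))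
    (hTdisj : ∀ a b, a ≠ b → Disjoint (T a) (T b))
    (hTcover : ∀ i : Fin n, ∃ a, i ∈ T a)
    -- constant step-size `γ ∈ (0,1]` with `γ L_{∇f} < τ` (i.e. `γ < τ / L_{∇f}`)
    (γ : ℝ) (hγ0 : 0 < γ) (hγ1 : γ ≤ 1) (hγτ : γ * Lf < τ)
    -- PSCA iterates with cyclic block selection `S^t = T_{t mod M}`
    (x : ℕ → TS n mblk) (hx0 : ∀ j, x 0 j ∈ X j)
    (xhat : ℕ → TS n mblk)
    (hxhat : ∀ t, ∀ i ∈ T ⟨t % M, Nat.mod_lt t hM⟩,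
      xhat t i ∈ X i ∧ IsMinOn (fun u => ft i u (x t) + g i u) (X i) (xhat t i))
    (hupd : ∀ t i, x (t + 1) i =
      if i ∈ T ⟨t % M, Nat.mod_lt t hM⟩ then x t i + γ • (xhat t i - x t i) else x t i) :
    ∀ r : ℕ,
      f (x (M * (r + 1))) + ∑ i, g i (x (M * (r + 1)) i) ≤
        f (x (M * r)) + ∑ i, g i (x (M * r) i) -
          (τ - γ * Lf) / (2 * γ) * ‖x (M * (r + 1)) - x (M * r)‖ ^ 2 := by
  set β := (τ - γ * Lf) / (2 * γ) with hβ
  -- feasibility of all iterates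
  have feas : ∀ t, ∀ j, x t j ∈ X j := by
    intro t
    induction t with
    | zero => exact hx0
    | succ t ih =>
      intro j
      rw [hupd t j]
      split_ifs with hj
      · have hxh := (hxhat t j hj).1
        have heq : x t j + γ • (xhat t j - x t j) = (1 - γ) • x t j + γ • xhat t j := by
          module
        rw [heq]
        exact hXcv j (ih j) hxh (by linarith) hγ0.le (by ring)
      · exact ih j
  -- per-iteration sufficient descent
  have step : ∀ t, f (x (t + 1)) + ∑ i, g i (x (t + 1) i) ≤
      f (x t) + ∑ i, g i (x t i) - β * ‖x (t + 1) - x t‖ ^ 2 := by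
    intro t
    have hfeas := feas t
    set S := T ⟨t % M, Nat.mod_lt t hM⟩ with hS
    set v : TS n mblk := x (t + 1) - x t with hv
    have hvi : ∀ i, v i = if i ∈ S then γ • (xhat t i - x t i) else 0 := by
      intro i
      rw [hv, PiLp.sub_apply, hupd t i, ← hS]
      split_ifs with h
      · abel
      · abel
    set A := ∑ i ∈ S, ⟪gradient f (x t) i, xhat t i - x t i⟫ with hA
    set B := ∑ i ∈ S, (g i (x t i) - g i (xhat t i)) with hB
    set D := ∑ i ∈ S, ‖xhat t i - x t i‖ ^ 2 with hD
    have hD0 : (0:ℝ) ≤ D := Finset.sum_nonneg fun i _ => by positivity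
    have hinner : ⟪gradient f (x t), v⟫ = γ * A := by
      rw [PiLp.inner_apply, hA, Finset.mul_sum]
      have h1 : ∀ i : Fin n, ⟪gradient f (x t) i, v i⟫ =
          if i ∈ S then γ * ⟪gradient f (x t) i, xhat t i - x t i⟫ else 0 := by
        intro i
        rw [hvi i]
        split_ifs with h
        · rw [real_inner_smul_right]
        · rw [inner_zero_right]
      simp only [h1]
      rw [Finset.sum_ite_mem, Finset.univ_inter]
    have hnorm : ‖v‖ ^ 2 = γ ^ 2 * D := by
      rw [← real_inner_self_eq_norm_sq, PiLp.inner_apply, hD, Finset.mul_sum]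
      have h1 : ∀ i : Fin n, ⟪v i, v i⟫ =
          if i ∈ S then γ ^ 2 * ‖xhat t i - x t i‖ ^ 2 else 0 := by
        intro i
        rw [hvi i]
        split_ifs with h
        · rw [real_inner_self_eq_norm_sq, norm_smul, mul_pow, Real.norm_eq_abs, sq_abs]
        · rw [inner_zero_right]
      simp only [h1]
      rw [Finset.sum_ite_mem, Finset.univ_inter]
    have hkey : ∀ i ∈ S, ⟪gradient f (x t) i, xhat t i - x t i⟫ ≤
        g i (x t i) - g i (xhat t i) - τ * ‖xhat t i - x t i‖ ^ 2 := by
      intro i hi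
      have h := key_opt (hXcv i) (hg i) hτ
        (fun u hu u' hu' => hsc i (x t) hfeas u hu u' hu')
        (hfeas i) ((hxhat t i hi).1) ((hxhat t i hi).2)
      rwa [hgc i (x t) hfeas] at h
    have hAB : A ≤ B - τ * D := by
      have h1 : A ≤ ∑ i ∈ S, (g i (x t i) - g i (xhat t i) - τ * ‖xhat t i - x t i‖ ^ 2) :=
        Finset.sum_le_sum hkey
      have h2 : ∑ i ∈ S, (g i (x t i) - g i (xhat t i) - τ * ‖xhat t i - x t i‖ ^ 2) =
          B - τ * D := by
        rw [hB, hD, Finset.mul_sum, ← Finset.sum_sub_distrib]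
      linarith
    have hgsum : ∑ i, g i (x (t + 1) i) ≤ ∑ i, g i (x t i) - γ * B := by
      have h1 : ∀ i : Fin n, g i (x (t + 1) i) ≤
          g i (x t i) + (if i ∈ S then γ * (g i (xhat t i) - g i (x t i)) else 0) := by
        intro i
        rw [hupd t i, ← hS]
        split_ifs with h
        · have hcx : g i ((1 - γ) • x t i + γ • xhat t i) ≤
              (1 - γ) * g i (x t i) + γ * g i (xhat t i) :=
            (hg i).2 (Set.mem_univ (x t i)) (Set.mem_univ (xhat t i))
              (by linarith) hγ0.le (by ring)
          have heq : x t i + γ • (xhat t i - x t i) = (1 - γ) • x t i + γ • xhat t i := by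
            module
          rw [heq]
          simp only [smul_eq_mul] at hcx
          linarith
        · simp
      have h2 := Finset.sum_le_sum (fun i (_ : i ∈ Finset.univ) => h1 i)
      rw [Finset.sum_add_distrib, Finset.sum_ite_mem, Finset.univ_inter] at h2
      have h3 : ∑ i ∈ S, γ * (g i (xhat t i) - g i (x t i)) = -(γ * B) := by
        rw [hB, Finset.mul_sum, ← Finset.sum_neg_distrib]
        exact Finset.sum_congr rfl fun i _ => by ring
      rw [h3] at h2
      linarith
    have hdesc := descent_lemma f hf Lf hfL (x t) (x (t + 1))
    rw [← hv, hinner, hnorm] at hdesc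
    have hβγ : β * ‖v‖ ^ 2 = γ * (τ - γ * Lf) / 2 * D := by
      rw [hnorm, hβ]
      field_simp
    have e5 : γ * A ≤ γ * B - γ * τ * D := by
      nlinarith [mul_le_mul_of_nonneg_left hAB hγ0.le]
    nlinarith [hdesc, hgsum, e5, hβγ, mul_nonneg (mul_nonneg hγ0.le hτ.le) hD0]
  intro r
  have hMM : M * (r + 1) = M * r + M := by ring
  rw [hMM]
  -- descent over the cycle
  have step_ineq : ∀ k : ℕ, f (x (M * r + k)) + ∑ i, g i (x (M * r + k) i) ≤
      f (x (M * r)) + ∑ i, g i (x (M * r) i) -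
        β * ∑ a ∈ Finset.range k, ‖x (M * r + a + 1) - x (M * r + a)‖ ^ 2 := by
    intro k
    induction k with
    | zero => simp
    | succ k ih =>
      rw [Finset.sum_range_succ]
      have h1 := step (M * r + k)
      have he : M * r + (k + 1) = M * r + k + 1 := rfl
      rw [he]
      nlinarith [h1, ih]
  -- uniqueness of the covering block
  have hTuniq : ∀ (i : Fin n) (a b : Fin M), i ∈ T a → i ∈ T b → a = b := by
    intro i a b ha hb
    by_contra hne
    exact Finset.disjoint_left.mp (hTdisj a b hne) ha hb
  -- blocks not in the current set do not move
  have hdiffzero : ∀ (a : ℕ) (ha : a < M) (i : Fin n), i ∉ T ⟨a, ha⟩ →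
      x (M * r + a + 1) i = x (M * r + a) i := by
    intro a ha i hi
    have h := hupd (M * r + a) i
    have hfin : (⟨(M * r + a) % M, Nat.mod_lt _ hM⟩ : Fin M) = ⟨a, ha⟩ := by
      apply Fin.ext
      show (M * r + a) % M = a
      rw [Nat.mul_add_mod, Nat.mod_eq_of_lt ha]
    rw [hfin, if_neg hi] at h
    exact h
  -- norm decomposition over the cycle
  have hcomp : ∀ w : TS n mblk, ‖w‖ ^ 2 = ∑ i, ‖w i‖ ^ 2 := by
    intro w
    rw [← real_inner_self_eq_norm_sq, PiLp.inner_apply]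
    exact Finset.sum_congr rfl fun i _ => real_inner_self_eq_norm_sq _
  have hnormeq : ‖x (M * r + M) - x (M * r)‖ ^ 2 =
      ∑ a ∈ Finset.range M, ‖x (M * r + a + 1) - x (M * r + a)‖ ^ 2 := by
    rw [hcomp]
    have h1 : ∀ a ∈ Finset.range M, ‖x (M * r + a + 1) - x (M * r + a)‖ ^ 2 =
        ∑ i, ‖x (M * r + a + 1) i - x (M * r + a) i‖ ^ 2 := by
      intro a _
      rw [hcomp]
      exact Finset.sum_congr rfl fun i _ => by rw [PiLp.sub_apply]
    rw [Finset.sum_congr rfl h1, Finset.sum_comm]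
    apply Finset.sum_congr rfl
    intro i _
    obtain ⟨ai, hai⟩ := hTcover i
    have hzero' : ∀ a ∈ Finset.range M, a ≠ (ai : ℕ) →
        x (M * r + a + 1) i - x (M * r + a) i = 0 := by
      intro a haM hane
      have haM' : a < M := Finset.mem_range.mp haM
      have hnotin : i ∉ T ⟨a, haM'⟩ := by
        intro hin
        exact hane (congrArg Fin.val (hTuniq i ⟨a, haM'⟩ ai hin hai))
      rw [hdiffzero a haM' i hnotin, sub_self]
    have haimem : (ai : ℕ) ∈ Finset.range M := Finset.mem_range.mpr ai.isLt
    have htel : x (M * r + M) i - x (M * r) i =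
        x (M * r + (ai : ℕ) + 1) i - x (M * r + (ai : ℕ)) i := by
      have hsum := Finset.sum_range_sub (fun a => x (M * r + a) i) M
      simp only [← add_assoc, add_zero] at hsum
      rw [← hsum]
      exact Finset.sum_eq_single_of_mem (ai : ℕ) haimem
        (fun b hb hbne => hzero' b hb hbne)
    rw [PiLp.sub_apply, htel]
    symm
    apply Finset.sum_eq_single_of_mem (ai : ℕ) haimem
    intro b hb hbne
    rw [hzero' b hb hbne]
    simp
  have := step_ineq M
  rw [hnormeq]
  linarith
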